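/- (Kirszbraun extension theorem for Euclidean spaces.) Let z, w ≥ 1, let S ⊆ ℝ^z, let L ≥ 0, and let f : S → ℝ^w satisfy ‖f(x) − f(y)‖ ≤ L·‖x − y‖ for all x, y ∈ S. Then there exists a function f̃ : ℝ^z → ℝ^w such that f̃(x) = f(x) for all x ∈ S and ‖f̃(x) − f̃(y)‖ ≤ L·‖x − y‖ for all x, y ∈ ℝ^z. -/

import Mathlib

open Finset RealInnerProductSpace

section
variable {E F : Type*} [NormedAddCommGroup E] [InnerProductSpace ℝ E]
  [NormedAddCommGroup F] [InnerProductSpace ℝ F] [FiniteDimensional ℝ F]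

set_option maxHeartbeats 2000000 in
lemma kirsz_finite (T : Finset E) (f : E → F) (L : ℝ) (hL : 0 ≤ L)
    (hf : ∀ s ∈ T, ∀ t ∈ T, ‖f s - f t‖ ≤ L * ‖s - t‖) (x : E) :
    ∃ y : F, ∀ s ∈ T, ‖y - f s‖ ≤ L * ‖x - s‖ := by
  classical
  rcases T.eq_empty_or_nonempty with rfl | hT
  · exact ⟨0, by simp⟩
  set q : E → F → ℝ := fun s y => ‖y - f s‖ ^ 2 - L ^ 2 * ‖x - s‖ ^ 2 with hq
  set ψ : F → ℝ := fun y => T.sup' hT (fun s => q s y) with hψ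
  have key : ∀ y : F, ∀ s ∈ T, q s y ≤ ψ y := fun y s hs => by
    simp only [hψ]; exact Finset.le_sup' (fun s => q s y) hs
  have hcont : Continuous ψ :=
    Continuous.finset_sup'_apply hT fun s _ => by
      apply Continuous.sub _ continuous_const
      exact ((continuous_id.sub continuous_const).norm).pow 2
  -- existence of a global minimizer
  obtain ⟨s1, hs1⟩ := id hT
  obtain ⟨y0, hy0glob⟩ : ∃ y0 : F, ∀ y, ψ y0 ≤ ψ y := by
    set ρ : ℝ := ψ (f s1) + L ^ 2 * ‖x - s1‖ ^ 2
    set R : ℝ := Real.sqrt (max ρ 0)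
    have hR0 : 0 ≤ R := Real.sqrt_nonneg _
    have hball : (Metric.closedBall (f s1) R).Nonempty := ⟨f s1, by simp [hR0]⟩
    obtain ⟨y0, hy0mem, hy0min⟩ :=
      (isCompact_closedBall (f s1) R).exists_isMinOn hball hcont.continuousOn
    refine ⟨y0, fun y => ?_⟩
    by_cases hy : y ∈ Metric.closedBall (f s1) R
    · exact hy0min hy
    · have h2 : R < ‖y - f s1‖ := by
        simpa [Metric.mem_closedBall, dist_eq_norm] using hy
      have h3 : ρ ≤ ‖y - f s1‖ ^ 2 := by
        calc ρ ≤ max ρ 0 := le_max_left _ _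
          _ = R ^ 2 := (Real.sq_sqrt (le_max_right _ _)).symm
          _ ≤ ‖y - f s1‖ ^ 2 := by
              have := h2.le
              nlinarith [hR0]
      have h4 : ψ (f s1) ≤ ψ y := by
        calc ψ (f s1) = ρ - L ^ 2 * ‖x - s1‖ ^ 2 := by simp only [ρ]; ring
          _ ≤ ‖y - f s1‖ ^ 2 - L ^ 2 * ‖x - s1‖ ^ 2 := by linarith
          _ = q s1 y := rfl
          _ ≤ ψ y := key y s1 hs1
      have h1' : ψ y0 ≤ ψ (f s1) :=
        hy0min (by simp [Metric.mem_closedBall, hR0])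
      linarith
  set m : ℝ := ψ y0 with hm
  -- each term at y0 is ≤ m
  have hterm_le : ∀ s ∈ T, q s y0 ≤ m := fun s hs => key y0 s hs
  -- the set of active indices
  set T' : Finset E := T.filter (fun s => q s y0 = m) with hT'
  have hT'ne : T'.Nonempty := by
    obtain ⟨s, hs, hse⟩ := Finset.exists_mem_eq_sup' hT (fun s => q s y0)
    exact ⟨s, Finset.mem_filter.2 ⟨hs, hse.symm⟩⟩
  -- Key claim: y0 is in the convex hull of the active image points
  have hT'sub : (T' : Set E) ⊆ (T : Set E) := Finset.coe_subset.2 (Finset.filter_subset _ _)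
  have hactive : ∀ s ∈ T', q s y0 = m := fun s hs => (Finset.mem_filter.1 hs).2
  have hhull : y0 ∈ convexHull ℝ (f '' (T' : Set E)) := by
    by_contra hcon
    have hCconv : Convex ℝ (convexHull ℝ (f '' (T' : Set E))) := convex_convexHull _ _
    have hCclosed : IsClosed (convexHull ℝ (f '' (T' : Set E))) :=
      ((T'.finite_toSet.image f).isCompact_convexHull ℝ).isClosed
    obtain ⟨φ, u, hu1, hu2⟩ := geometric_hahn_banach_point_closed hCconv hCclosed hcon
    set v : F := (InnerProductSpace.toDual ℝ F).symm φ with hv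
    have hvinner : ∀ y : F, ⟪v, y⟫ = φ y := fun y => InnerProductSpace.toDual_symm_apply
    set δ : ℝ := u - φ y0 with hδ
    have hδpos : 0 < δ := sub_pos.2 hu1
    have hinner_lt : ∀ s ∈ T', ⟪y0 - f s, v⟫ < -δ := by
      intro s hs
      have h1 : u < φ (f s) := hu2 _ (subset_convexHull ℝ _ ⟨s, hs, rfl⟩)
      have h2 : ⟪y0 - f s, v⟫ = φ y0 - φ (f s) := by
        rw [real_inner_comm, hvinner, map_sub]
      rw [h2]; simp only [hδ]; linarith
    have hvne : v ≠ 0 := by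
      intro h0
      obtain ⟨s, hs⟩ := hT'ne
      have := hinner_lt s hs
      rw [h0, inner_zero_right] at this
      have h2 : ⟪y0 - f s, v⟫ = φ y0 - φ (f s) := by
        rw [real_inner_comm, hvinner, map_sub]
      have h1 : u < φ (f s) := hu2 _ (subset_convexHull ℝ _ ⟨s, hs, rfl⟩)
      rw [h0, inner_zero_right] at h2
      simp only [hδ] at hδpos
      linarith [hδpos, sub_eq_zero.1 h2.symm]
    set c : ℝ := ‖v‖ ^ 2 with hc
    have hcpos : 0 < c := by have := norm_pos_iff.2 hvne; positivity
    set bound : E → ℝ := fun s =>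
      if q s y0 = m then δ / c else (m - q s y0) / (2 * |⟪y0 - f s, v⟫| + c + 1) with hbound
    have hboundpos : ∀ s ∈ T, 0 < bound s := by
      intro s hs
      simp only [hbound]
      split_ifs with h
      · positivity
      · have h1 : q s y0 < m := lt_of_le_of_ne (hterm_le s hs) h
        have h2 : 0 < 2 * |⟪y0 - f s, v⟫| + c + 1 := by positivity
        exact div_pos (by linarith) h2
    set τ : ℝ := min 1 (T.inf' hT bound) with hτ
    have hτpos : 0 < τ := lt_min one_pos ((Finset.lt_inf'_iff hT).2 hboundpos)
    set t : ℝ := τ / 2 with ht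
    have htpos : 0 < t := by positivity
    have ht1 : t ≤ 1 := by
      have := min_le_left 1 (T.inf' hT bound); simp only [ht]; linarith
    have htlt : ∀ s ∈ T, t < bound s := by
      intro s hs
      have h1 : τ ≤ bound s := le_trans (min_le_right _ _) (Finset.inf'_le _ hs)
      simp only [ht]; linarith [hboundpos s hs]
    set y1 : F := y0 + t • v with hy1
    have hq1 : ∀ s ∈ T, q s y1 = q s y0 + 2 * t * ⟪y0 - f s, v⟫ + t ^ 2 * c := by
      intro s hs
      have : y1 - f s = (y0 - f s) + t • v := by simp only [hy1]; abel
      simp only [hq] at *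
      rw [this, norm_add_sq_real, real_inner_smul_right, norm_smul, mul_pow]
      simp [hc, abs_of_pos htpos]
      ring
    have hlt : ∀ s ∈ T, q s y1 < m := by
      intro s hs
      rw [hq1 s hs]
      by_cases hact : q s y0 = m
      · have h1 : ⟪y0 - f s, v⟫ < -δ := hinner_lt s (Finset.mem_filter.2 ⟨hs, hact⟩)
        have h2 : t < δ / c := by have := htlt s hs; simpa [hbound, hact] using this
        have h3 : t * c < δ := (lt_div_iff₀ hcpos).1 h2
        have : t ^ 2 * c = t * (t * c) := by ring
        nlinarith
      · have h2 : t < (m - q s y0) / (2 * |⟪y0 - f s, v⟫| + c + 1) := by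
          have := htlt s hs; simpa [hbound, hact] using this
        have hden : 0 < 2 * |⟪y0 - f s, v⟫| + c + 1 := by positivity
        have h3 : t * (2 * |⟪y0 - f s, v⟫| + c + 1) < m - q s y0 := (lt_div_iff₀ hden).1 h2
        have h4 : ⟪y0 - f s, v⟫ ≤ |⟪y0 - f s, v⟫| := le_abs_self _
        have h5 : 2 * t * ⟪y0 - f s, v⟫ ≤ 2 * t * |⟪y0 - f s, v⟫| :=
          mul_le_mul_of_nonneg_left h4 (by positivity)
        have h6 : t ^ 2 * c ≤ t * c := by nlinarith [mul_nonneg (mul_nonneg htpos.le hcpos.le) (sub_nonneg.2 ht1)]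
        linarith
    have : ψ y1 < m := by
      simp only [hψ]
      exact (Finset.sup'_lt_iff hT).2 fun s hs => hlt s hs
    exact absurd (hy0glob y1) (not_le.2 this)
  -- conclude m ≤ 0
  have hm0 : m ≤ 0 := by
    rw [_root_.convexHull_eq] at hhull
    obtain ⟨ι, tt, wgt, zf, hw0, hw1, hz, hcm⟩ := hhull
    have hchoice : ∀ i, i ∈ tt → ∃ s, s ∈ T' ∧ f s = zf i := by
      intro i hi; obtain ⟨s, hs, hfs⟩ := hz i hi; exact ⟨s, hs, hfs⟩
    choose! σ hσT' hσf using hchoice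
    set a : ι → F := fun i => f (σ i) - y0 with ha
    have hcm' : ∑ i ∈ tt, wgt i • zf i = y0 := by
      rw [← hcm, Finset.centerMass_eq_of_sum_1 _ _ hw1]
    have hsum0 : ∑ i ∈ tt, wgt i • a i = 0 := by
      have h1 : ∑ i ∈ tt, wgt i • a i
          = (∑ i ∈ tt, wgt i • zf i) - (∑ i ∈ tt, wgt i) • y0 := by
        rw [Finset.sum_smul, ← Finset.sum_sub_distrib]
        refine Finset.sum_congr rfl fun i hi => ?_
        rw [ha]; simp only [smul_sub, hσf i hi]
      rw [h1, hcm', hw1, one_smul, sub_self]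
    have hnorm : ∀ i ∈ tt, ‖a i‖ ^ 2 = m + L ^ 2 * ‖x - σ i‖ ^ 2 := by
      intro i hi
      have h1 : q (σ i) y0 = m := hactive _ (hσT' i hi)
      simp only [hq] at h1
      rw [ha]; simp only [norm_sub_rev (f (σ i)) y0]
      linarith
    have hip : ∀ i ∈ tt, ∀ j ∈ tt, m + L ^ 2 * ⟪x - σ i, x - σ j⟫ ≤ ⟪a i, a j⟫ := by
      intro i hi j hj
      have hij : a i - a j = f (σ i) - f (σ j) := by simp only [ha]; abel
      have h1 : ‖a i - a j‖ ^ 2 = ‖a i‖ ^ 2 - 2 * ⟪a i, a j⟫ + ‖a j‖ ^ 2 :=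
        norm_sub_sq_real _ _
      have h2 : ‖f (σ i) - f (σ j)‖ ≤ L * ‖σ i - σ j‖ :=
        hf _ (hT'sub (hσT' i hi)) _ (hT'sub (hσT' j hj))
      have h2' : ‖f (σ i) - f (σ j)‖ ^ 2 ≤ L ^ 2 * ‖σ i - σ j‖ ^ 2 := by
        rw [← mul_pow]; exact pow_le_pow_left₀ (norm_nonneg _) h2 2
      have h3 : σ i - σ j = (x - σ j) - (x - σ i) := by abel
      have h4 : ‖σ i - σ j‖ ^ 2
          = ‖x - σ j‖ ^ 2 - 2 * ⟪x - σ j, x - σ i⟫ + ‖x - σ i‖ ^ 2 := by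
        rw [h3]; exact norm_sub_sq_real _ _
      have h5 := hnorm i hi
      have h6 := hnorm j hj
      have h7 : ⟪x - σ j, x - σ i⟫ = ⟪x - σ i, x - σ j⟫ := real_inner_comm _ _
      rw [hij] at h1
      nlinarith [h1, h2', h4, h5, h6, sq_nonneg L]
    have hexp : (0:ℝ) = ∑ i ∈ tt, ∑ j ∈ tt, wgt i * wgt j * ⟪a i, a j⟫ := by
      calc (0:ℝ) = ⟪∑ i ∈ tt, wgt i • a i, ∑ j ∈ tt, wgt j • a j⟫ := by
            rw [hsum0]; simp
        _ = ∑ i ∈ tt, ∑ j ∈ tt, wgt i * wgt j * ⟪a i, a j⟫ := by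
            rw [sum_inner]
            refine Finset.sum_congr rfl fun i hi => ?_
            rw [real_inner_smul_left, inner_sum, Finset.mul_sum]
            refine Finset.sum_congr rfl fun j hj => ?_
            rw [real_inner_smul_right]; ring
    set X : E := ∑ i ∈ tt, wgt i • (x - σ i) with hX
    have hexp2 : ∑ i ∈ tt, ∑ j ∈ tt, wgt i * wgt j * ⟪x - σ i, x - σ j⟫ = ‖X‖ ^ 2 := by
      rw [← real_inner_self_eq_norm_sq, hX, sum_inner]
      refine Finset.sum_congr rfl fun i hi => ?_
      rw [real_inner_smul_left, inner_sum, Finset.mul_sum]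
      refine Finset.sum_congr rfl fun j hj => ?_
      rw [real_inner_smul_right]; ring
    have hlb : m + L ^ 2 * ‖X‖ ^ 2
        ≤ ∑ i ∈ tt, ∑ j ∈ tt, wgt i * wgt j * ⟪a i, a j⟫ := by
      have h1 : ∀ i ∈ tt, ∀ j ∈ tt,
          wgt i * wgt j * (m + L ^ 2 * ⟪x - σ i, x - σ j⟫) ≤ wgt i * wgt j * ⟪a i, a j⟫ :=
        fun i hi j hj => mul_le_mul_of_nonneg_left (hip i hi j hj)
          (mul_nonneg (hw0 i hi) (hw0 j hj))
      have h2 : ∑ i ∈ tt, ∑ j ∈ tt, wgt i * wgt j * (m + L ^ 2 * ⟪x - σ i, x - σ j⟫)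
          ≤ ∑ i ∈ tt, ∑ j ∈ tt, wgt i * wgt j * ⟪a i, a j⟫ :=
        Finset.sum_le_sum fun i hi => Finset.sum_le_sum fun j hj => h1 i hi j hj
      have h3 : ∑ i ∈ tt, ∑ j ∈ tt, wgt i * wgt j * (m + L ^ 2 * ⟪x - σ i, x - σ j⟫)
          = m * ((∑ i ∈ tt, wgt i) * (∑ j ∈ tt, wgt j))
            + L ^ 2 * ∑ i ∈ tt, ∑ j ∈ tt, wgt i * wgt j * ⟪x - σ i, x - σ j⟫ := by
        rw [Finset.sum_mul_sum, Finset.mul_sum, Finset.mul_sum, ← Finset.sum_add_distrib]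
        refine Finset.sum_congr rfl fun i hi => ?_
        rw [Finset.mul_sum, Finset.mul_sum, ← Finset.sum_add_distrib]
        refine Finset.sum_congr rfl fun j hj => ?_
        ring
      rw [h3, hw1, hexp2] at h2
      calc m + L ^ 2 * ‖X‖ ^ 2 = m * (1 * 1) + L ^ 2 * ‖X‖ ^ 2 := by ring
        _ ≤ _ := h2
    rw [← hexp] at hlb
    linarith [mul_nonneg (sq_nonneg L) (sq_nonneg ‖X‖)]
  refine ⟨y0, fun s hs => ?_⟩
  have h1 : q s y0 ≤ 0 := le_trans (hterm_le s hs) hm0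
  have h2 : ‖y0 - f s‖ ^ 2 ≤ (L * ‖x - s‖) ^ 2 := by
    rw [mul_pow]; simp only [hq] at h1; linarith
  have h3 := Real.sqrt_le_sqrt h2
  rwa [Real.sqrt_sq (norm_nonneg _), Real.sqrt_sq (by positivity)] at h3


set_option maxHeartbeats 1000000 in
lemma kirsz_onePoint (S : Set E) (f : E → F) (L : ℝ) (hL : 0 ≤ L)
    (hf : ∀ s ∈ S, ∀ t ∈ S, ‖f s - f t‖ ≤ L * ‖s - t‖) (x : E) :
    ∃ y : F, ∀ s ∈ S, ‖y - f s‖ ≤ L * ‖x - s‖ := by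
  classical
  rcases S.eq_empty_or_nonempty with rfl | ⟨s0, hs0⟩
  · exact ⟨0, by simp⟩
  set K : Set F := Metric.closedBall (f s0) (L * ‖x - s0‖) with hK
  set Z : S → Set F := fun s => Metric.closedBall (f s) (L * ‖x - (s : E)‖) with hZ
  have hKc : IsCompact K := isCompact_closedBall _ _
  have hZc : ∀ s : S, IsClosed (Z s) := fun s => Metric.isClosed_closedBall
  have hne : (K ∩ ⋂ s : S, Z s).Nonempty := by
    by_contra hcon
    rw [Set.not_nonempty_iff_eq_empty] at hcon
    obtain ⟨u, hu⟩ := hKc.elim_finite_subfamily_closed Z hZc hcon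
    set T : Finset E := insert s0 (u.image Subtype.val) with hT
    have hTS : ∀ s ∈ T, s ∈ S := by
      intro s hs
      rcases Finset.mem_insert.1 hs with rfl | hs
      · exact hs0
      · obtain ⟨a, ha, hae⟩ := Finset.mem_image.1 hs; exact hae ▸ a.2
    obtain ⟨y, hy⟩ := kirsz_finite T f L hL
      (fun s hs t ht => hf s (hTS s hs) t (hTS t ht)) x
    have hyK : y ∈ K := by
      rw [hK, Metric.mem_closedBall, dist_eq_norm]
      exact hy s0 (Finset.mem_insert_self _ _)
    have hyZ : y ∈ ⋂ s ∈ u, Z s := by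
      refine Set.mem_iInter₂.2 fun s hs => ?_
      rw [hZ, Metric.mem_closedBall, dist_eq_norm]
      exact hy (s : E) (Finset.mem_insert_of_mem (Finset.mem_image.2 ⟨s, hs, rfl⟩))
    exact absurd (Set.mem_inter hyK hyZ) (by rw [hu]; exact Set.notMem_empty y)
  obtain ⟨y, _, hy2⟩ := hne
  refine ⟨y, fun s hs => ?_⟩
  have := Set.mem_iInter.1 hy2 ⟨s, hs⟩
  rwa [hZ, Metric.mem_closedBall, dist_eq_norm] at this

set_option maxHeartbeats 1000000 in
lemma kirsz_full (S : Set E) (f : E → F) (L : ℝ) (hL : 0 ≤ L)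
    (hf : ∀ s ∈ S, ∀ t ∈ S, ‖f s - f t‖ ≤ L * ‖s - t‖) :
    ∃ g : E → F, (∀ x ∈ S, g x = f x) ∧ ∀ x y, ‖g x - g y‖ ≤ L * ‖x - y‖ := by
  classical
  set good : Set (E × F) → Prop := fun G =>
    (∀ x ∈ S, (x, f x) ∈ G) ∧
      ∀ p ∈ G, ∀ q ∈ G, ‖p.2 - q.2‖ ≤ L * ‖p.1 - q.1‖ with hgood
  have hfun : ∀ G, good G → ∀ x y₁ y₂, (x, y₁) ∈ G → (x, y₂) ∈ G → y₁ = y₂ := by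
    intro G hG x y₁ y₂ h1 h2
    have := hG.2 _ h1 _ h2
    simp only [sub_self, norm_zero, mul_zero] at this
    have : ‖y₁ - y₂‖ ≤ 0 := by simpa using this
    rwa [norm_le_zero_iff, sub_eq_zero] at this
  have hG0 : good {p | p.1 ∈ S ∧ p.2 = f p.1} := by
    constructor
    · intro x hx; exact ⟨hx, rfl⟩
    · intro p hp q hq
      rw [hp.2, hq.2]
      exact hf _ hp.1 _ hq.1
  obtain ⟨M, hM0, hMgood, hMmax⟩ :
      ∃ M, {p : E × F | p.1 ∈ S ∧ p.2 = f p.1} ⊆ M ∧ good M ∧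
        ∀ G, good G → M ⊆ G → G = M := by
    obtain ⟨M, hM0, hMmax⟩ := zorn_subset_nonempty {G | good G}
      (fun c hc hchain hcne => by
        refine ⟨⋃₀ c, ⟨?_, ?_⟩, fun s hs => Set.subset_sUnion_of_mem hs⟩
        · obtain ⟨G, hG⟩ := hcne
          intro x hx
          exact Set.mem_sUnion.2 ⟨G, hG, (hc hG).1 x hx⟩
        · rintro p hp q hq
          obtain ⟨G1, hG1, hp1⟩ := Set.mem_sUnion.1 hp
          obtain ⟨G2, hG2, hq2⟩ := Set.mem_sUnion.1 hq
          rcases hchain.total hG1 hG2 with h | h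
          · exact (hc hG2).2 p (h hp1) q hq2
          · exact (hc hG1).2 p hp1 q (h hq2))
      _ hG0
    exact ⟨M, hM0, hMmax.1, fun G hG hMG => Set.Subset.antisymm (hMmax.2 hG hMG) hMG⟩
  have htotal : ∀ x : E, ∃ y, (x, y) ∈ M := by
    intro x
    by_contra hcon
    push_neg at hcon
    set D : Set E := Prod.fst '' M with hD
    set f' : E → F := fun a => if h : ∃ y, (a, y) ∈ M then h.choose else 0 with hf'
    have hf'mem : ∀ a ∈ D, (a, f' a) ∈ M := by
      intro a ha
      obtain ⟨p, hp, rfl⟩ := ha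
      have h : ∃ y, (p.1, y) ∈ M := ⟨p.2, hp⟩
      simp only [hf', dif_pos h]
      exact h.choose_spec
    have hf'lip : ∀ a ∈ D, ∀ b ∈ D, ‖f' a - f' b‖ ≤ L * ‖a - b‖ := by
      intro a ha b hb
      exact hMgood.2 _ (hf'mem a ha) _ (hf'mem b hb)
    obtain ⟨y, hy⟩ := kirsz_onePoint D f' L hL hf'lip x
    have hxD : x ∉ D := by
      intro hx
      exact hcon _ (hf'mem x hx)
    set M' : Set (E × F) := insert (x, y) M with hM'
    have hM'good : good M' := by
      constructor
      · intro a ha; exact Set.mem_insert_of_mem _ (hMgood.1 a ha)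
      · rintro p hp q hq
        rcases Set.mem_insert_iff.1 hp with rfl | hp <;>
          rcases Set.mem_insert_iff.1 hq with h | hq
        · rw [h]; simp [mul_nonneg hL (norm_nonneg _)]
        · have hqD : q.1 ∈ D := ⟨q, hq, rfl⟩
          have hq2 : q.2 = f' q.1 := hfun M hMgood _ _ _ hq (hf'mem _ hqD)
          simpa [hq2] using hy q.1 hqD
        · rcases h with rfl
          have hpD : p.1 ∈ D := ⟨p, hp, rfl⟩
          have hp2 : p.2 = f' p.1 := hfun M hMgood _ _ _ hp (hf'mem _ hpD)
          rw [norm_sub_rev, norm_sub_rev p.1 x]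
          simpa [hp2] using hy p.1 hpD
        · exact hMgood.2 p hp q hq
    have : M' = M := hMmax M' hM'good (Set.subset_insert _ _)
    have hxyM : (x, y) ∈ M := this ▸ Set.mem_insert _ _
    exact hcon y hxyM
  choose g hg using htotal
  refine ⟨g, fun x hx => ?_, fun x y => ?_⟩
  · exact hfun M hMgood x _ _ (hg x) (hM0 ⟨hx, rfl⟩)
  · exact hMgood.2 _ (hg x) _ (hg y)

end

theorem stmt_5 (z w : ℕ) (hz : 1 ≤ z) (hw : 1 ≤ w)
    (S : Set (EuclideanSpace ℝ (Fin z))) (L : ℝ) (hL : 0 ≤ L)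
    (f : EuclideanSpace ℝ (Fin z) → EuclideanSpace ℝ (Fin w))
    (hf : ∀ x ∈ S, ∀ y ∈ S, ‖f x - f y‖ ≤ L * ‖x - y‖) :
    ∃ g : EuclideanSpace ℝ (Fin z) → EuclideanSpace ℝ (Fin w),
      (∀ x ∈ S, g x = f x) ∧ ∀ x y, ‖g x - g y‖ ≤ L * ‖x - y‖ := by
  exact kirsz_full S f L hL hf
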